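/- The domination polynomial of K_{k,k} is D(K_{k,k}, x) = (1+x)^{2k} - 2(1+x)^k + 2x^k + 1, and for odd k, D(K_{k,k}, -1) = -1. -/
import Mathlib

open Finset

open scoped Classical in
noncomputable def domPoly {V : Type*} [Fintype V] (G : SimpleGraph V) (x : ℝ) : ℝ :=
  ∑ S ∈ Finset.univ.powerset.filter
      (fun S : Finset V => ∀ v : V, v ∈ S ∨ ∃ u ∈ S, G.Adj u v), x ^ S.card

lemma sum_pow_card {α : Type*} [DecidableEq α] (s : Finset α) (x : ℝ) :
    ∑ S ∈ s.powerset, x ^ S.card = (1 + x) ^ s.card := by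
  induction s using Finset.induction with
  | empty => simp
  | @insert a s ha ih =>
    rw [Finset.powerset_insert, Finset.sum_union, Finset.sum_image]
    · have h1 : ∀ S ∈ s.powerset, x ^ (insert a S).card = x * x ^ S.card := by
        intro S hS
        rw [Finset.card_insert_of_notMem (fun h => ha (Finset.mem_powerset.1 hS h)),
          pow_succ, mul_comm]
      rw [Finset.sum_congr rfl h1, ← Finset.mul_sum, ih,
        Finset.card_insert_of_notMem ha, pow_succ]
      ring
    · intro S hS T hT h
      have : (insert a S).erase a = (insert a T).erase a := by rw [h]
      rwa [Finset.erase_insert (fun h => ha (Finset.mem_powerset.1 hS h)),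
        Finset.erase_insert (fun h => ha (Finset.mem_powerset.1 hT h))] at this
    · rw [Finset.disjoint_right]
      intro S hS
      simp only [Finset.mem_image] at hS
      obtain ⟨T, hT, rfl⟩ := hS
      simp only [Finset.mem_powerset]
      intro h
      exact ha (Finset.mem_powerset.1 (Finset.mem_powerset.2 h) (Finset.mem_insert_self a T))

theorem domPoly_Kkk (k : ℕ) (hk : 1 ≤ k) :
    (∀ x : ℝ, domPoly (completeBipartiteGraph (Fin k) (Fin k)) x =
      (1 + x) ^ (2 * k) - 2 * (1 + x) ^ k + 2 * x ^ k + 1) ∧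
    (Odd k → domPoly (completeBipartiteGraph (Fin k) (Fin k)) (-1) = -1) := by
  classical
  haveI : NeZero k := ⟨by omega⟩
  have huniv : (Finset.univ : Finset (Fin k)) ≠ ∅ :=
    Finset.univ_nonempty.ne_empty
  have key : ∀ x : ℝ, domPoly (completeBipartiteGraph (Fin k) (Fin k)) x =
      (1 + x) ^ (2 * k) - 2 * (1 + x) ^ k + 2 * x ^ k + 1 := by
    intro x
    unfold domPoly
    rw [Finset.powerset_univ, Finset.filter_congr_decidable]
    -- characterization of dominating sets
    have hPQ : ∀ S : Finset (Fin k ⊕ Fin k),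
        (∀ v, v ∈ S ∨ ∃ u ∈ S, (completeBipartiteGraph (Fin k) (Fin k)).Adj u v) ↔
        (S.toRight ≠ ∅ ∨ S.toLeft = Finset.univ) ∧
        (S.toLeft ≠ ∅ ∨ S.toRight = Finset.univ) := by
      intro S
      constructor
      · intro h
        constructor
        · by_cases hB : S.toRight = ∅
          · right
            ext a
            simp only [Finset.mem_toLeft, Finset.mem_univ, iff_true]
            rcases h (Sum.inl a) with h1 | ⟨u, hu, hadj⟩
            · exact h1
            · exfalso
              rcases u with b | b
              · simp at hadj
              · exact absurd (Finset.mem_toRight.2 hu) (by simp [hB])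
          · left; exact hB
        · by_cases hA : S.toLeft = ∅
          · right
            ext a
            simp only [Finset.mem_toRight, Finset.mem_univ, iff_true]
            rcases h (Sum.inr a) with h1 | ⟨u, hu, hadj⟩
            · exact h1
            · exfalso
              rcases u with b | b
              · exact absurd (Finset.mem_toLeft.2 hu) (by simp [hA])
              · simp at hadj
          · left; exact hA
      · rintro ⟨h1, h2⟩ v
        rcases v with a | a
        · rcases h1 with hB | hA
          · obtain ⟨b, hb⟩ := Finset.nonempty_iff_ne_empty.2 hB
            exact Or.inr ⟨Sum.inr b, Finset.mem_toRight.1 hb, by simp⟩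
          · exact Or.inl (Finset.mem_toLeft.1 (hA ▸ Finset.mem_univ a))
        · rcases h2 with hA | hB
          · obtain ⟨b, hb⟩ := Finset.nonempty_iff_ne_empty.2 hA
            exact Or.inr ⟨Sum.inl b, Finset.mem_toLeft.1 hb, by simp⟩
          · exact Or.inl (Finset.mem_toRight.1 (hB ▸ Finset.mem_univ a))
    -- reindex by pairs of finsets
    have reindex :
        ∑ S ∈ Finset.univ.filter
          (fun S : Finset (Fin k ⊕ Fin k) => ∀ v, v ∈ S ∨ ∃ u ∈ S,
            (completeBipartiteGraph (Fin k) (Fin k)).Adj u v), x ^ S.card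
        = ∑ p ∈ Finset.univ.filter
            (fun p : Finset (Fin k) × Finset (Fin k) =>
              (p.2 ≠ ∅ ∨ p.1 = Finset.univ) ∧ (p.1 ≠ ∅ ∨ p.2 = Finset.univ)),
            x ^ (p.1.card + p.2.card) := by
      apply Finset.sum_nbij' (fun S => (S.toLeft, S.toRight))
        (fun p => p.1.disjSum p.2)
      · intro S hS
        simp only [Finset.mem_filter, Finset.mem_univ, true_and] at hS ⊢
        exact (hPQ S).1 hS
      · intro p hp
        simp only [Finset.mem_filter, Finset.mem_univ, true_and] at hp ⊢
        rw [hPQ]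
        simpa using hp
      · intro S _
        exact Finset.toLeft_disjSum_toRight
      · intro p _
        simp
      · intro S _
        rw [Finset.card_toLeft_add_card_toRight]
    rw [reindex]
    -- split the index set
    have hsplit : Finset.univ.filter
        (fun p : Finset (Fin k) × Finset (Fin k) =>
          (p.2 ≠ ∅ ∨ p.1 = Finset.univ) ∧ (p.1 ≠ ∅ ∨ p.2 = Finset.univ))
        = Finset.univ.filter
            (fun p : Finset (Fin k) × Finset (Fin k) => p.1 ≠ ∅ ∧ p.2 ≠ ∅)
          ∪ {((∅ : Finset (Fin k)), (Finset.univ : Finset (Fin k))),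
             ((Finset.univ : Finset (Fin k)), (∅ : Finset (Fin k)))} := by
      ext p
      simp only [Finset.mem_filter, Finset.mem_univ, true_and, Finset.mem_union,
        Finset.mem_insert, Finset.mem_singleton, Prod.ext_iff]
      constructor
      · rintro ⟨h1, h2⟩
        by_cases hA : p.1 = ∅
        · right; left
          exact ⟨hA, h2.resolve_left (by simp [hA])⟩
        · by_cases hB : p.2 = ∅
          · right; right
            exact ⟨h1.resolve_left (by simp [hB]), hB⟩
          · left; exact ⟨hA, hB⟩
      · rintro (⟨hA, hB⟩ | ⟨hA, hB⟩ | ⟨hA, hB⟩)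
        · exact ⟨Or.inl hB, Or.inl hA⟩
        · exact ⟨Or.inl (hB ▸ huniv), Or.inr hB⟩
        · exact ⟨Or.inr hA, Or.inl (hA ▸ huniv)⟩
    rw [hsplit, Finset.sum_union, Finset.sum_pair]
    · -- compute the main sum
      have hprod : Finset.univ.filter
          (fun p : Finset (Fin k) × Finset (Fin k) => p.1 ≠ ∅ ∧ p.2 ≠ ∅)
          = (Finset.univ.filter (fun A : Finset (Fin k) => A ≠ ∅)) ×ˢ
            (Finset.univ.filter (fun A : Finset (Fin k) => A ≠ ∅)) := by
        ext p; simp [Finset.mem_product]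
      have hone : ∑ A ∈ Finset.univ.filter (fun A : Finset (Fin k) => A ≠ ∅),
          x ^ A.card = (1 + x) ^ k - 1 := by
        have htot : ∑ A ∈ (Finset.univ : Finset (Finset (Fin k))), x ^ A.card
            = (1 + x) ^ k := by
          rw [← Finset.powerset_univ, sum_pow_card, Finset.card_univ, Fintype.card_fin]
        have hsplit2 := Finset.sum_filter_add_sum_filter_not
          (Finset.univ : Finset (Finset (Fin k))) (fun A => A ≠ ∅)
          (fun A => x ^ A.card)
        have hne : Finset.univ.filter (fun A : Finset (Fin k) => ¬ A ≠ ∅) = {∅} := by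
          ext A; simp
        rw [hne] at hsplit2
        simp only [Finset.sum_singleton, Finset.card_empty, pow_zero] at hsplit2
        linarith [htot ▸ hsplit2]
      rw [hprod, Finset.sum_product]
      have : ∀ A ∈ Finset.univ.filter (fun A : Finset (Fin k) => A ≠ ∅),
          ∑ B ∈ Finset.univ.filter (fun A : Finset (Fin k) => A ≠ ∅),
            x ^ (A.card + B.card)
          = x ^ A.card * ((1 + x) ^ k - 1) := by
        intro A _
        rw [← hone, Finset.mul_sum]
        exact Finset.sum_congr rfl (fun B _ => by rw [pow_add])
      rw [Finset.sum_congr rfl this, ← Finset.sum_mul, hone]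
      simp only [Finset.card_empty, Finset.card_univ, Fintype.card_fin, zero_add,
        add_zero]
      rw [two_mul, pow_add]
      ring
    · simp [Prod.ext_iff, huniv]
    · rw [Finset.disjoint_right]
      intro p hp
      simp only [Finset.mem_insert, Finset.mem_singleton] at hp
      simp only [Finset.mem_filter, Finset.mem_univ, true_and, not_and_or, not_not]
      rcases hp with rfl | rfl
      · left; rfl
      · right; rfl
  refine ⟨key, fun hodd => ?_⟩
  rw [key (-1)]
  have h1 : (1 : ℝ) + (-1) = 0 := by ring
  rw [h1, zero_pow (by omega : 2 * k ≠ 0), zero_pow (by omega : k ≠ 0),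
    hodd.neg_one_pow]
  ring
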